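/- Let w ≥ 3, set k = w − 1, and let G = (V,E) be an undirected graph (self-loops allowed). If G admits a w-realization of length at least k, then the auxiliary graph H^{(k)}(G) has a connected component whose vertices and edges together cover every edge of G. -/

import Mathlib

/-- The sequence (di)graph of `x` with window size `w` has an arc `(u,v)` exactly when
there are positions `k < k' < k + w` with `x_k = u` and `x_{k'} = v`. -/
def seqArc {V : Type*} (w : ℕ) (x : List V) (u v : V) : Prop :=
  ∃ k k' : ℕ, k < k' ∧ k' < k + w ∧ x[k]? = some u ∧ x[k']? = some v

/-- Edge of the (undirected) sequence graph of `x` with window size `w`. -/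
def seqEdge {V : Type*} (w : ℕ) (x : List V) (u v : V) : Prop :=
  seqArc w x u v ∨ seqArc w x v u

/-- `x` is a `w`-realization of the undirected graph on vertex set `V` (self-loops allowed)
with adjacency relation `Adj`. -/
def IsRealizationG {V : Type*} (w : ℕ) (Adj : V → V → Prop) (x : List V) : Prop :=
  x ≠ [] ∧ (∀ v : V, v ∈ x) ∧ ∀ u v : V, Adj u v ↔ seqEdge w x u v

/-- Vertex of the auxiliary graph `H^{(k)}(G)`: a `k`-tuple of vertices of `G` that are
pairwise adjacent (`{v_i, v_j} ∈ E` for all `i < j`). -/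
def HVert {V : Type*} (Adj : V → V → Prop) (k : ℕ) (y : List V) : Prop :=
  y.length = k ∧ y.Pairwise Adj

/-- (Oriented) edge of the auxiliary graph `H^{(k)}(G)`: `{y, y'}` is an edge when
`(y_2, …, y_k) = (y'_1, …, y'_{k−1})` and `{y_1, y'_k} ∈ E`. -/
def HAdj {V : Type*} (Adj : V → V → Prop) (k : ℕ) (y y' : List V) : Prop :=
  HVert Adj k y ∧ HVert Adj k y' ∧ y.tail = y'.dropLast ∧
    ∃ u v : V, y.head? = some u ∧ y'.getLast? = some v ∧ Adj u v

/-- The edge `{u,v}` of `G` is covered by the `H^{(k)}`-vertex `y`: `u` and `v` appear at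
two distinct positions of the tuple `y`. -/
def CoversV {V : Type*} (y : List V) (u v : V) : Prop :=
  ∃ i j : ℕ, i ≠ j ∧ y[i]? = some u ∧ y[j]? = some v

/-- The edge `{u,v}` of `G` is covered by the `H^{(k)}`-edge `{y, y'}` (oriented as
`y` shifting into `y'`): `{u,v} = {y_1, y'_k}`. -/
def CoversE {V : Type*} (y y' : List V) (u v : V) : Prop :=
  (y.head? = some u ∧ y'.getLast? = some v) ∨ (y.head? = some v ∧ y'.getLast? = some u)

/-- Reachability in the (undirected) auxiliary graph `H^{(k)}(G)`. -/
def HReach {V : Type*} (Adj : V → V → Prop) (k : ℕ) : List V → List V → Prop :=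
  Relation.ReflTransGen fun a b => HAdj Adj k a b ∨ HAdj Adj k b a

/-- Some connected component of `H^{(k)}(G)` covers, by its vertices and edges together,
every edge of `G`. -/
def ComponentCovers {V : Type*} (Adj : V → V → Prop) (k : ℕ) : Prop :=
  ∃ y₀ : List V, HVert Adj k y₀ ∧ ∀ u v : V, Adj u v →
    (∃ y : List V, HReach Adj k y₀ y ∧ CoversV y u v) ∨
    (∃ y y' : List V, HReach Adj k y₀ y ∧
      (HAdj Adj k y y' ∧ CoversE y y' u v ∨ HAdj Adj k y' y ∧ CoversE y' y u v))


section Aux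

variable {V : Type*}

private def win (x : List V) (k i : ℕ) : List V := (x.drop i).take k

private lemma win_length (x : List V) (k i : ℕ) (h : i + k ≤ x.length) :
    (win x k i).length = k := by
  simp [win]; omega

private lemma win_getElem? (x : List V) (k i j : ℕ) (hj : j < k) :
    (win x k i)[j]? = x[i + j]? := by
  simp [win, List.getElem?_take, List.getElem?_drop, hj]

private lemma win_head? (x : List V) (k i : ℕ) (hk : 0 < k) :
    (win x k i).head? = x[i]? := by
  rw [List.head?_eq_getElem?, win_getElem? x k i 0 hk, Nat.add_zero]

private lemma win_getLast? (x : List V) (k i : ℕ) (hk : 0 < k) (h : i + k ≤ x.length) :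
    (win x k i).getLast? = x[i + (k - 1)]? := by
  rw [List.getLast?_eq_getElem?, win_length x k i h, win_getElem? x k i (k-1) (by omega)]

variable {Adj : V → V → Prop} {w k : ℕ} {x : List V}
  (hiff : ∀ u v : V, Adj u v ↔ seqEdge w x u v) (hk : k + 1 = w) (hk2 : 2 ≤ k)

include hiff hk hk2

private lemma win_hvert (i : ℕ) (h : i + k ≤ x.length) : HVert Adj k (win x k i) := by
  refine ⟨win_length x k i h, List.pairwise_iff_getElem.mpr fun a b ha hb hab => ?_⟩
  rw [win_length x k i h] at ha hb
  refine (hiff _ _).mpr (Or.inl ⟨i + a, i + b, by omega, by omega, ?_, ?_⟩)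
  · rw [← win_getElem? x k i a ha]; exact (List.getElem?_eq_getElem _).symm ▸ rfl
  · rw [← win_getElem? x k i b hb]; exact (List.getElem?_eq_getElem _).symm ▸ rfl

private lemma win_hadj (i : ℕ) (h : i + 1 + k ≤ x.length) :
    HAdj Adj k (win x k i) (win x k (i + 1)) := by
  refine ⟨win_hvert hiff hk hk2 i (by omega), win_hvert hiff hk hk2 (i+1) (by omega), ?_, ?_⟩
  · apply List.ext_getElem?
    intro j
    rw [List.getElem?_tail, List.getElem?_dropLast, win_length x k (i+1) (by omega)]
    by_cases hj : j < k - 1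
    · rw [if_pos hj, win_getElem? x k i (j+1) (by omega), win_getElem? x k (i+1) j (by omega)]
      congr 1; omega
    · rw [if_neg hj]
      have : (win x k i)[j+1]? = none := by
        apply List.getElem?_eq_none
        rw [win_length x k i (by omega)]; omega
      exact this
  · have hi : i < x.length := by omega
    have hik : i + k < x.length := by omega
    refine ⟨x[i], x[i+k], ?_, ?_, ?_⟩
    · rw [win_head? x k i (by omega)]; exact (List.getElem?_eq_getElem hi)
    · rw [win_getLast? x k (i+1) (by omega) (by omega)]
      rw [show i + 1 + (k - 1) = i + k by omega]
      exact (List.getElem?_eq_getElem hik)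
    · exact (hiff _ _).mpr (Or.inl ⟨i, i + k, by omega, by omega,
        List.getElem?_eq_getElem hi, List.getElem?_eq_getElem hik⟩)

private lemma win_reach (i : ℕ) (h : i + k ≤ x.length) :
    HReach Adj k (win x k 0) (win x k i) := by
  induction i with
  | zero => exact Relation.ReflTransGen.refl
  | succ n ih =>
    exact Relation.ReflTransGen.tail (ih (by omega))
      (Or.inl (win_hadj hiff hk hk2 n (by omega)))

private lemma main_arc (hkn : k ≤ x.length) (u v : V) (harc : seqArc w x u v) :
    (∃ y : List V, HReach Adj k (win x k 0) y ∧ CoversV y u v) ∨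
    (∃ y y' : List V, HReach Adj k (win x k 0) y ∧
      (HAdj Adj k y y' ∧ CoversE y y' u v ∨ HAdj Adj k y' y ∧ CoversE y' y u v)) := by
  obtain ⟨p, p', hpp, hpw, hu, hv⟩ := harc
  have hp'n : p' < x.length := by
    by_contra hcon
    rw [List.getElem?_eq_none (by omega)] at hv
    cases hv
  by_cases hcase : p' < p + k
  · -- both positions in a single window
    set i := min p (x.length - k) with hi
    have h1 : i + k ≤ x.length := by omega
    have h2 : i ≤ p := by omega
    have h3 : p - i < k := by omega
    have h4 : p' - i < k := by omega
    refine Or.inl ⟨win x k i, win_reach hiff hk hk2 i h1, p - i, p' - i, by omega, ?_, ?_⟩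
    · rw [win_getElem? x k i _ h3, show i + (p - i) = p by omega]; exact hu
    · rw [win_getElem? x k i _ h4, show i + (p' - i) = p' by omega]; exact hv
  · -- p' = p + k : covered by an edge between consecutive windows
    have hpk : p' = p + k := by omega
    have h1 : p + 1 + k ≤ x.length := by omega
    refine Or.inr ⟨win x k p, win x k (p+1), win_reach hiff hk hk2 p (by omega),
      Or.inl ⟨win_hadj hiff hk hk2 p h1, Or.inl ⟨?_, ?_⟩⟩⟩
    · rw [win_head? x k p (by omega)]; exact hu
    · rw [win_getLast? x k (p+1) (by omega) (by omega),
        show p + 1 + (k - 1) = p' by omega]; exact hv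

end Aux

theorem stmt13 {V : Type*} (Adj : V → V → Prop) (hsymm : Symmetric Adj)
    (w : ℕ) (hw : 3 ≤ w) (x : List V) (hx : IsRealizationG w Adj x)
    (hlen : w - 1 ≤ x.length) :
    ComponentCovers Adj (w - 1) := by
  obtain ⟨hne, hmem, hiff⟩ := hx
  set k := w - 1 with hkdef
  have hk : k + 1 = w := by omega
  have hk2 : 2 ≤ k := by omega
  refine ⟨win x k 0, win_hvert hiff hk hk2 0 (by omega), fun u v huv => ?_⟩
  rcases (hiff u v).mp huv with harc | harc
  · exact main_arc hiff hk hk2 (by omega) u v harc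
  · rcases main_arc hiff hk hk2 (by omega) v u harc with ⟨y, hy, i, j, hij, h1, h2⟩ | ⟨y, y', hy, hcov⟩
    · exact Or.inl ⟨y, hy, j, i, hij.symm, h2, h1⟩
    · refine Or.inr ⟨y, y', hy, ?_⟩
      rcases hcov with ⟨ha, hc⟩ | ⟨ha, hc⟩
      · exact Or.inl ⟨ha, hc.symm⟩
      · exact Or.inr ⟨ha, hc.symm⟩
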